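/- Let n ≥ 1 and let B(n) be the braid of length n over k. For every integer j ≥ 1 let a_j denote the largest integer k ≥ 0 such that V^j(B(n)) ⊆ p^k·B(n). Then the sequence a_j/j converges as j → ∞, and its limit (the first Newton slope of B(n)) equals 1/2 if n is odd, and equals (n/2 − 1)/n if n is even. -/

import Mathlib

open WittVector
open Fin.NatCast Fin.CommRing

/-- The operator `V` of the braid `B(n)` over `W(k)`, in coordinates with respect to the
basis `e₁,…,eₙ` (first component) and `f₁,…,fₙ` (second component), 0-indexed:
`V eᵢ = f_{i+1}` for `i ≤ n−1`, `V eₙ = (−1)ⁿ p f₁`, `V fᵢ = p e_{i+1}` for `i ≤ n−1`,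
`V fₙ = e₁` (the latter two values being determined by `FV = VF = p`), and `V` is
`σ⁻¹`-semilinear. -/
noncomputable def braidV (p : ℕ) [Fact p.Prime] (k : Type*) [Field k] [CharP k p]
    [PerfectRing k p] (n : ℕ) :
    ((Fin n → WittVector p k) × (Fin n → WittVector p k)) →
      ((Fin n → WittVector p k) × (Fin n → WittVector p k)) :=
  fun x =>
    (fun i => if i.val = 0
        then (WittVector.frobeniusEquiv p k).symm (x.2 ⟨n - 1, by have := i.isLt; omega⟩)
        else (p : WittVector p k) *
          (WittVector.frobeniusEquiv p k).symm (x.2 ⟨i.val - 1, by have := i.isLt; omega⟩),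
     fun i => if i.val = 0
        then (-1) ^ n * (p : WittVector p k) *
          (WittVector.frobeniusEquiv p k).symm (x.1 ⟨n - 1, by have := i.isLt; omega⟩)
        else (WittVector.frobeniusEquiv p k).symm (x.1 ⟨i.val - 1, by have := i.isLt; omega⟩))

/-- `V^j(B(n)) ⊆ p^a · B(n)`. -/
def braidVpow_sub (p : ℕ) [Fact p.Prime] (k : Type*) [Field k] [CharP k p]
    [PerfectRing k p] (n j a : ℕ) : Prop :=
  ∀ x : (Fin n → WittVector p k) × (Fin n → WittVector p k),
    ∃ y, (braidV p k n)^[j] x = (p : WittVector p k) ^ a • y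

lemma finsub1 (n : ℕ) [NeZero n] (i : Fin n) (h : i.val = 0) : (i - 1).val = n - 1 := by
  have hn : n ≠ 0 := NeZero.ne n
  rcases Nat.lt_or_ge n 2 with h2 | h2
  · interval_cases n
    · exact absurd rfl hn
    · have := (i-1).isLt; omega
  · have h1 : (1 : Fin n).val = 1 := Fin.val_one' n |>.trans (Nat.mod_eq_of_lt (by omega))
    rw [Fin.sub_def]
    simp only [h1, h]
    rw [Nat.add_zero, Nat.mod_eq_of_lt (by omega)]

lemma finsub2 (n : ℕ) [NeZero n] (i : Fin n) (h : i.val ≠ 0) : (i - 1).val = i.val - 1 := by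
  have hn : n ≠ 0 := NeZero.ne n
  have hi := i.isLt
  have h2 : 2 ≤ n := by omega
  have h1 : (1 : Fin n).val = 1 := Fin.val_one' n |>.trans (Nat.mod_eq_of_lt (by omega))
  rw [Fin.sub_def]
  simp only [h1]
  have : n - 1 + i.val = (i.val - 1) + n := by omega
  rw [this, Nat.add_mod_right, Nat.mod_eq_of_lt (by omega)]

/-- coordinate of a pair, indexed by `Bool × Fin n`. -/
def zc {W : Type*} {n : ℕ} (x : (Fin n → W) × (Fin n → W)) (b : Bool) (i : Fin n) : W :=
  cond b (x.2 i) (x.1 i)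

/-- parity toggle -/
def tog : ℕ → Bool → Bool
  | 0, b => b
  | (j+1), b => tog j (!b)

lemma tog_two_add (j : ℕ) (b : Bool) : tog (j + 2) b = tog j b := by
  show tog j (!!b) = tog j b
  simp

lemma tog_two_mul (s : ℕ) (b : Bool) : tog (2 * s) b = b := by
  induction s with
  | zero => rfl
  | succ s ih => rw [show 2 * (s+1) = 2*s + 2 by ring, tog_two_add, ih]

lemma tog_two_mul_add_one (s : ℕ) (b : Bool) : tog (2 * s + 1) b = !b := by
  induction s with
  | zero => rfl
  | succ s ih => rw [show 2 * (s+1) + 1 = (2*s+1) + 2 by ring, tog_two_add, ih]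

/-- exponent of `p` in one application of `V` at output coordinate `(b, i)` -/
def eexp {n : ℕ} (b : Bool) (i : Fin n) : ℕ := if decide (i.val = 0) = b then 1 else 0

/-- exponent of `p` in `V^j` at output coordinate `(b, i)` -/
def Eexp {n : ℕ} [NeZero n] : ℕ → Bool → Fin n → ℕ
  | 0, _, _ => 0
  | (j+1), b, i => eexp b i + Eexp j (!b) (i - 1)

section
variable (p : ℕ) [Fact p.Prime] (k : Type*) [Field k] [CharP k p] [PerfectRing k p]
  (n : ℕ) [NeZero n]

local notation "W" => WittVector p k
noncomputable def phiInv : W → W := fun w => (frobeniusEquiv p k).symm w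

lemma braidV_zc (x : (Fin n → W) × (Fin n → W)) (b : Bool) (i : Fin n) :
    zc (braidV p k n x) b i =
      (if b = true ∧ i.val = 0 then (-1) ^ n else 1) * (p : W) ^ (eexp b i) *
        phiInv p k (zc x (!b) (i - 1)) := by
  have hn : n ≠ 0 := NeZero.ne n
  by_cases h : i.val = 0
  · have hv : (i - 1) = (⟨n - 1, by omega⟩ : Fin n) := Fin.ext (finsub1 n i h)
    have hi0 : i = 0 := Fin.ext h
    cases b <;>
      simp [zc, braidV, eexp, h, hv, phiInv, mul_comm, eq_true hi0]
  · have hv : (i - 1) = (⟨i.val - 1, by have := i.isLt; omega⟩ : Fin n) :=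
      Fin.ext (finsub2 n i h)
    have hi0 : i ≠ 0 := fun e => h (by rw [e]; rfl)
    cases b <;>
      simp [zc, braidV, eexp, h, hv, phiInv, hi0]

/-- The key semilinear formula for iterates of `V`. -/
lemma key (j : ℕ) (b : Bool) (i : Fin n) :
    ∃ u : W, IsUnit u ∧ ∀ x,
      zc ((braidV p k n)^[j] x) b i =
        u * (p : W) ^ (Eexp j b i) * (phiInv p k)^[j] (zc x (tog j b) (i - (j : Fin n))) := by
  induction j generalizing b i with
  | zero =>
    refine ⟨1, isUnit_one, fun x => ?_⟩
    simp [Eexp, tog]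
  | succ j ih =>
    obtain ⟨u, hu, hval⟩ := ih (!b) (i - 1)
    refine ⟨(if b = true ∧ i.val = 0 then (-1) ^ n else 1) * phiInv p k u, ?_, fun x => ?_⟩
    · apply IsUnit.mul
      · split
        · exact (isUnit_one.neg).pow n
        · exact isUnit_one
      · exact hu.map (frobeniusEquiv p k).symm.toRingHom
    · rw [Function.iterate_succ_apply', braidV_zc, hval]
      have hmul : ∀ a c : W, phiInv p k (a * c) = phiInv p k a * phiInv p k c := fun a c =>
        map_mul _ a c
      have hp : phiInv p k ((p : W) ^ (Eexp j (!b) (i-1))) = (p : W) ^ (Eexp j (!b) (i-1)) := by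
        simp [phiInv]
      rw [hmul, hmul, hp]
      have hidx : i - 1 - ((j : ℕ) : Fin n) = i - (((j+1 : ℕ)) : Fin n) := by
        push_cast
        ring
      have htog : tog j (!b) = tog (j+1) b := rfl
      rw [hidx, htog]
      have hE : Eexp (j+1) b i = eexp b i + Eexp j (!b) (i - 1) := rfl
      rw [hE, pow_add]
      rw [← Function.iterate_succ_apply' (phiInv p k)]
      ring

end


section
variable (p : ℕ) [Fact p.Prime] (k : Type*) [Field k] [CharP k p] [PerfectRing k p]
  (n : ℕ) [NeZero n]

local notation "W" => WittVector p k

lemma sub_of_le {j a : ℕ} (h : ∀ (b : Bool) (i : Fin n), a ≤ Eexp j b i) :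
    braidVpow_sub p k n j a := by
  intro x
  choose u hu hval using fun (b : Bool) (i : Fin n) => key p k n j b i
  refine ⟨(fun i => u false i * (p : W) ^ (Eexp j false i - a) *
      (phiInv p k)^[j] (zc x (tog j false) (i - (j : Fin n))),
    fun i => u true i * (p : W) ^ (Eexp j true i - a) *
      (phiInv p k)^[j] (zc x (tog j true) (i - (j : Fin n)))), ?_⟩
  have key2 : ∀ (b : Bool) (i : Fin n),
      zc ((braidV p k n)^[j] x) b i = (p : W) ^ a *
        (u b i * (p : W) ^ (Eexp j b i - a) *
          (phiInv p k)^[j] (zc x (tog j b) (i - (j : Fin n)))) := by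
    intro b i
    rw [hval b i x]
    have hpow : (p : W) ^ (Eexp j b i) = (p : W) ^ a * (p : W) ^ (Eexp j b i - a) := by
      rw [← pow_add]; congr 1; have := h b i; omega
    rw [hpow]
    ring
  refine Prod.ext (funext fun i => ?_) (funext fun i => ?_)
  · have := key2 false i
    simpa [zc, Prod.smul_fst, Pi.smul_apply, smul_eq_mul] using this
  · have := key2 true i
    simpa [zc, Prod.smul_fst, Pi.smul_apply, smul_eq_mul] using this

lemma le_of_sub {j a : ℕ} (h : braidVpow_sub p k n j a) (b : Bool) (i : Fin n) :
    a ≤ Eexp j b i := by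
  classical
  set b' := tog j b with hb'
  set i' := i - (j : Fin n) with hi'
  -- basis vector at (b', i')
  set x : (Fin n → W) × (Fin n → W) :=
    (fun m => if b' = false ∧ m = i' then 1 else 0,
     fun m => if b' = true ∧ m = i' then 1 else 0) with hx
  have hzc : zc x b' i' = 1 := by
    cases hb : b' <;> simp [zc, hx, hb]
  obtain ⟨y, hy⟩ := h x
  obtain ⟨u, hu, hval⟩ := key p k n j b i
  have h1 : zc ((braidV p k n)^[j] x) b i =
      u * (p : W) ^ (Eexp j b i) := by
    have hfix : (phiInv p k)^[j] (1 : W) = 1 :=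
      Function.iterate_fixed (show phiInv p k 1 = 1 from map_one (frobeniusEquiv p k).symm) j
    rw [hval x, ← hb', ← hi', hzc, hfix, mul_one]
  have h2 : zc ((braidV p k n)^[j] x) b i = (p : W) ^ a * zc y b i := by
    rw [hy]
    cases b <;> simp [zc, Prod.smul_fst, Prod.smul_snd, Pi.smul_apply, smul_eq_mul]
  have hdvd : (p : W) ^ a ∣ (p : W) ^ (Eexp j b i) := by
    obtain ⟨v, hv⟩ := hu
    refine ⟨v⁻¹ * zc y b i, ?_⟩
    have : (u : W) * (p : W) ^ (Eexp j b i) = (p : W) ^ a * zc y b i := h1 ▸ h2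
    calc (p : W) ^ (Eexp j b i) = (v⁻¹ : Wˣ) * (u * (p : W) ^ (Eexp j b i)) := by
          rw [← hv]; rw [← mul_assoc]; simp
      _ = (v⁻¹ : Wˣ) * ((p : W) ^ a * zc y b i) := by rw [this]
      _ = (p : W) ^ a * ((v⁻¹ : Wˣ) * zc y b i) := by ring
  have hirr := WittVector.irreducible (k := k) p
  exact (pow_dvd_pow_iff hirr.ne_zero hirr.not_isUnit).mp hdvd

end

section comb
variable {n : ℕ} [NeZero n]

lemma tog_add (a c : ℕ) (b : Bool) : tog (a + c) b = tog a (tog c b) := by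
  induction c generalizing b with
  | zero => rfl
  | succ c ih =>
    show tog (a + c) (!b) = _
    rw [ih (!b)]
    rfl

lemma tog_not (t : ℕ) (b : Bool) : tog t (!b) = !(tog t b) := by
  induction t generalizing b with
  | zero => rfl
  | succ t ih =>
    show tog t (!!b) = !(tog t (!b))
    rw [ih b]
    simp

lemma eexp_le (b : Bool) (i : Fin n) : eexp b i ≤ 1 := by
  unfold eexp; split <;> omega

lemma eexp_add_not (b : Bool) (i : Fin n) : eexp b i + eexp (!b) i = 1 := by
  cases b <;> unfold eexp <;> by_cases h : i.val = 0 <;> simp [h]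

lemma Eexp_le (j : ℕ) (b : Bool) (i : Fin n) : Eexp j b i ≤ j := by
  induction j generalizing b i with
  | zero => exact le_refl 0
  | succ j ih =>
    show eexp b i + Eexp j (!b) (i - 1) ≤ j + 1
    have := eexp_le b i
    have := ih (!b) (i - 1)
    omega

lemma Eexp_add (L j : ℕ) (b : Bool) (i : Fin n) :
    Eexp (L + j) b i = Eexp L b i + Eexp j (tog L b) (i - (L : Fin n)) := by
  induction L generalizing b i with
  | zero => simp [Eexp, tog]
  | succ L ih =>
    rw [show L + 1 + j = (L + j) + 1 from by ring]
    show eexp b i + Eexp (L + j) (!b) (i - 1) = (eexp b i + Eexp L (!b) (i - 1)) + _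
    rw [ih (!b) (i - 1)]
    have hidx : i - 1 - ((L : ℕ) : Fin n) = i - (((L + 1 : ℕ)) : Fin n) := by
      push_cast; ring
    rw [hidx]
    have htog : tog L (!b) = tog (L + 1) b := rfl
    rw [htog]
    omega

lemma Eexp_sum (j : ℕ) (b : Bool) (i : Fin n) :
    Eexp j b i = ∑ t ∈ Finset.range j, eexp (tog t b) (i - (t : Fin n)) := by
  induction j generalizing b i with
  | zero => simp [Eexp]
  | succ j ih =>
    show eexp b i + Eexp j (!b) (i - 1) = _
    rw [ih (!b) (i - 1), Finset.sum_range_succ']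
    have hS : ∑ t ∈ Finset.range j, eexp (tog t (!b)) (i - 1 - (t : Fin n)) =
        ∑ t ∈ Finset.range j, eexp (tog (t + 1) b) (i - (((t + 1 : ℕ)) : Fin n)) := by
      apply Finset.sum_congr rfl
      intro t _
      have h1 : tog t (!b) = tog (t + 1) b := by
        rw [tog_add t 1 b]; rfl
      have h2 : i - 1 - ((t : ℕ) : Fin n) = i - (((t + 1 : ℕ)) : Fin n) := by
        push_cast; ring
      rw [h1, h2]
    have h0 : eexp (tog 0 b) (i - ((0 : ℕ) : Fin n)) = eexp b i := by
      norm_num [tog]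
    rw [hS, h0, add_comm]

/-- odd case: over a full period `2n` the exponent is exactly `n`. -/
lemma Eexp_two_n (hodd : Odd n) (b : Bool) (i : Fin n) : Eexp (2 * n) b i = n := by
  rw [Eexp_sum, two_mul, Finset.sum_range_add]
  rw [← Finset.sum_add_distrib]
  have hpt : ∀ t, eexp (tog t b) (i - (t : Fin n)) +
      eexp (tog (n + t) b) (i - ((n + t : ℕ) : Fin n)) = 1 := by
    intro t
    have h1 : ((n + t : ℕ) : Fin n) = (t : Fin n) := by
      push_cast [Fin.natCast_self]; ring
    have h2 : tog (n + t) b = !(tog t b) := by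
      obtain ⟨s, hs⟩ := hodd
      rw [Nat.add_comm, tog_add, hs, tog_two_mul_add_one, tog_not]
    rw [h1, h2]
    exact eexp_add_not _ _
  calc ∑ t ∈ Finset.range n, (eexp (tog t b) (i - (t : Fin n)) +
          eexp (tog (n + t) b) (i - ((n + t : ℕ) : Fin n)))
      = ∑ t ∈ Finset.range n, 1 := Finset.sum_congr rfl fun t _ => hpt t
    _ = n := by simp

end comb

section comb2
variable {n : ℕ} [NeZero n]

lemma sum_togB (m : ℕ) (b : Bool) :
    ∑ t ∈ Finset.range (2 * m), (if tog t b = true then (1 : ℤ) else 0) = m := by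
  induction m with
  | zero => simp
  | succ m ih =>
    rw [show 2 * (m + 1) = (2 * m) + 1 + 1 from by ring, Finset.sum_range_succ,
      Finset.sum_range_succ, ih, tog_two_mul, show 2 * m + 1 = 2 * m + 1 from rfl,
      tog_two_mul_add_one]
    cases b <;> simp <;> ring

/-- even case: exact value over a full period `n`. -/
lemma Eexp_even (hev : Even n) (b : Bool) (i : Fin n) :
    (Eexp n b i : ℤ) = n / 2 - 1 + 2 * (if tog i.val b = true then 1 else 0) := by
  obtain ⟨m, hm⟩ := hev
  have hn2 : n = 2 * m := by omega
  have hArw : ∀ t ∈ Finset.range n, (if (i - (t : Fin n)) = 0 then (1:ℤ) else 0)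
      = (if t = i.val then (1:ℤ) else 0) := by
    intro t ht
    rw [Finset.mem_range] at ht
    congr 1
    simp only [eq_iff_iff, sub_eq_zero]
    constructor
    · intro h
      have := congrArg Fin.val h
      rwa [Fin.val_natCast, Nat.mod_eq_of_lt ht, eq_comm] at this
    · rintro rfl
      exact (Fin.cast_val_eq_self i).symm
  have hpt : ∀ t, ((eexp (tog t b) (i - (t : Fin n)) : ℤ))
      = 1 - (if (i - (t : Fin n)) = 0 then (1:ℤ) else 0)
          - (if tog t b = true then (1:ℤ) else 0)
          + 2 * (if (i - (t : Fin n)) = 0 then (1:ℤ) else 0)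
              * (if tog t b = true then (1:ℤ) else 0) := by
    intro t
    unfold eexp
    by_cases h1 : (i - (t : Fin n)) = 0 <;> cases h2 : tog t b <;>
      · have hval : ((i - (t : Fin n)).val = 0) ↔ (i - (t : Fin n)) = 0 := by
          rw [Fin.ext_iff]; simp
        simp [h1, h2, hval]
  have hsum : (Eexp n b i : ℤ) = ∑ t ∈ Finset.range n,
      ((eexp (tog t b) (i - (t : Fin n)) : ℤ)) := by
    rw [Eexp_sum]; push_cast; rfl
  rw [hsum]
  calc (∑ t ∈ Finset.range n, ((eexp (tog t b) (i - (t : Fin n)) : ℤ)))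
      = ∑ t ∈ Finset.range n, (1 - (if t = i.val then (1:ℤ) else 0)
          - (if tog t b = true then (1:ℤ) else 0)
          + 2 * (if t = i.val then (1:ℤ) else 0) * (if tog t b = true then (1:ℤ) else 0)) := by
        apply Finset.sum_congr rfl
        intro t ht
        rw [hpt t, hArw t ht]
    _ = (n : ℤ) - 1 - m + 2 * (if tog i.val b = true then 1 else 0) := by
        have hmem : i.val ∈ Finset.range n := Finset.mem_range.mpr i.isLt
        have hB : ∑ t ∈ Finset.range n, (if tog t b = true then (1:ℤ) else 0) = m := by
          rw [hn2]; exact sum_togB m b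
        have hA : ∑ t ∈ Finset.range n, (if t = i.val then (1:ℤ) else 0) = 1 := by
          rw [Finset.sum_ite_eq' (Finset.range n) i.val (fun _ => (1:ℤ))]
          simp [hmem]
        have hAB : ∑ t ∈ Finset.range n,
            2 * (if t = i.val then (1:ℤ) else 0) * (if tog t b = true then (1:ℤ) else 0)
            = 2 * (if tog i.val b = true then (1:ℤ) else 0) := by
          have hptw : ∀ t, 2 * (if t = i.val then (1:ℤ) else 0) *
              (if tog t b = true then (1:ℤ) else 0)
              = (if t = i.val then (2 * (if tog t b = true then (1:ℤ) else 0)) else 0) := by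
            intro t; split <;> ring
          rw [Finset.sum_congr rfl fun t _ => hptw t]
          rw [Finset.sum_ite_eq' (Finset.range n) i.val
            (fun t => 2 * (if tog t b = true then (1:ℤ) else 0))]
          simp [hmem]
        rw [Finset.sum_add_distrib, Finset.sum_sub_distrib, Finset.sum_sub_distrib,
          Finset.sum_const, hA, hB, hAB]
        simp
    _ = _ := by
        have : (n : ℤ) / 2 = m := by omega
        rw [this]
        push_cast [hn2]
        ring

end comb2

section comb3
variable {n : ℕ} [NeZero n]

lemma Eexp_periodic {L : ℕ} (hL2 : 2 ∣ L) (hLn : n ∣ L) (j : ℕ) (b : Bool) (i : Fin n) :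
    Eexp (L + j) b i = Eexp L b i + Eexp j b i := by
  rw [Eexp_add]
  obtain ⟨s, hs⟩ := hL2
  have htog : tog L b = b := by rw [hs]; exact tog_two_mul s b
  have hcast : ((L : ℕ) : Fin n) = 0 := by
    obtain ⟨c, hc⟩ := hLn
    rw [hc]; push_cast [Fin.natCast_self]; ring
  rw [htog, hcast, sub_zero]

lemma Eexp_ge_div {L m : ℕ} (hL2 : 2 ∣ L) (hLn : n ∣ L) (hL : 0 < L)
    (hm : ∀ (b : Bool) (i : Fin n), m ≤ Eexp L b i) :
    ∀ j (b : Bool) (i : Fin n), (j / L) * m ≤ Eexp j b i := by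
  intro j
  induction j using Nat.strong_induction_on with
  | _ j ih =>
    intro b i
    rcases Nat.lt_or_ge j L with h | h
    · rw [Nat.div_eq_of_lt h]; simp
    · obtain ⟨j', rfl⟩ : ∃ j', j = L + j' := ⟨j - L, by omega⟩
      rw [Eexp_periodic hL2 hLn]
      have hdiv : (L + j') / L = j' / L + 1 := by
        rw [Nat.add_comm, Nat.add_div_right _ hL]
      rw [hdiv]
      have := ih j' (by omega) b i
      have := hm b i
      nlinarith

lemma Eexp_le_div {L m : ℕ} (hL2 : 2 ∣ L) (hLn : n ∣ L) (hL : 0 < L)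
    (hval : Eexp L false (0 : Fin n) = m) :
    ∀ j, Eexp j false (0 : Fin n) ≤ (j / L) * m + L := by
  intro j
  induction j using Nat.strong_induction_on with
  | _ j ih =>
    rcases Nat.lt_or_ge j L with h | h
    · calc Eexp j false (0 : Fin n) ≤ j := Eexp_le j false 0
        _ ≤ (j / L) * m + L := by omega
    · obtain ⟨j', rfl⟩ : ∃ j', j = L + j' := ⟨j - L, by omega⟩
      rw [Eexp_periodic hL2 hLn, hval]
      have hdiv : (L + j') / L = j' / L + 1 := by
        rw [Nat.add_comm, Nat.add_div_right _ hL]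
      rw [hdiv]
      have := ih j' (by omega)
      nlinarith

end comb3

open Filter in
lemma conv_aux (aseq : ℕ → ℕ) (m L : ℕ) (hL : 0 < L)
    (hbnd : ∀ j, 1 ≤ j → (j / L) * m ≤ aseq j ∧ aseq j ≤ (j / L) * m + L) :
    Tendsto (fun j => (aseq j : ℝ) / (j : ℝ)) atTop (nhds ((m : ℝ) / L)) := by
  have key : ∀ j : ℕ, 1 ≤ j → ‖(aseq j : ℝ) / j - (m : ℝ) / L‖ ≤ ((m : ℝ) + L) / j := by
    intro j hj
    have hjR : (0 : ℝ) < j := by exact_mod_cast hj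
    have hLR : (0 : ℝ) < L := by exact_mod_cast hL
    obtain ⟨hlo, hhi⟩ := hbnd j hj
    set q := j / L with hq
    have hmod : j = L * q + j % L := (Nat.div_add_mod j L).symm.trans (by ring)
    have hrlt : j % L < L := Nat.mod_lt _ hL
    have hloR : (q : ℝ) * m ≤ aseq j := by exact_mod_cast hlo
    have hhiR : (aseq j : ℝ) ≤ q * m + L := by exact_mod_cast hhi
    have hjQ : (j : ℝ) = L * q + (j % L : ℕ) := by exact_mod_cast hmod
    have hrR : ((j % L : ℕ) : ℝ) < L := by exact_mod_cast hrlt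
    have hrR0 : (0 : ℝ) ≤ ((j % L : ℕ) : ℝ) := by positivity
    have hm0 : (0 : ℝ) ≤ (m : ℝ) := by positivity
    have heq : (aseq j : ℝ) / j - (m : ℝ) / L = ((aseq j : ℝ) * L - j * m) / (j * L) := by
      field_simp
    rw [heq, norm_div, Real.norm_eq_abs, Real.norm_eq_abs]
    rw [abs_of_pos (by positivity : (0:ℝ) < (j : ℝ) * L)]
    rw [div_le_div_iff₀ (by positivity) hjR]
    have habs : |(aseq j : ℝ) * L - j * m| ≤ ((m : ℝ) + L) * L := by
      rw [abs_le]
      constructor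
      · nlinarith
      · nlinarith
    calc |(aseq j : ℝ) * L - j * m| * j ≤ (((m : ℝ) + L) * L) * j :=
          mul_le_mul_of_nonneg_right habs (le_of_lt hjR)
      _ = ((m : ℝ) + L) * (j * L) := by ring
  have h0 : Tendsto (fun j : ℕ => ((m : ℝ) + L) / j) atTop (nhds 0) :=
    tendsto_const_div_atTop_nhds_zero_nat _
  have h1 : Tendsto (fun j : ℕ => (aseq j : ℝ) / j - (m : ℝ) / L) atTop (nhds 0) :=
    squeeze_zero_norm' (Filter.eventually_atTop.mpr ⟨1, key⟩) h0
  have h2 := h1.add_const ((m : ℝ) / L)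
  simpa using h2

section final
variable (p : ℕ) [Fact p.Prime] (k : Type*) [Field k] [CharP k p] [PerfectRing k p]
  (n : ℕ) [NeZero n]

local notation "W" => WittVector p k

noncomputable def Amin (j : ℕ) : ℕ :=
  Finset.inf' Finset.univ Finset.univ_nonempty fun q : Bool × Fin n => Eexp j q.1 q.2

lemma greatest (j : ℕ) :
    IsGreatest {a : ℕ | braidVpow_sub p k n j a} (Amin n j) := by
  constructor
  · exact sub_of_le p k n fun b i => Finset.inf'_le _ (Finset.mem_univ (b, i))
  · exact fun a ha => Finset.le_inf' _ _ fun q _ => le_of_sub p k n ha q.1 q.2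

lemma Amin_bounds {L m : ℕ} (hL2 : 2 ∣ L) (hLn : n ∣ L) (hL : 0 < L)
    (hm : ∀ (b : Bool) (i : Fin n), m ≤ Eexp L b i)
    (hval : Eexp L false (0 : Fin n) = m) (j : ℕ) :
    (j / L) * m ≤ Amin n j ∧ Amin n j ≤ (j / L) * m + L :=
  ⟨Finset.le_inf' _ _ fun q _ => Eexp_ge_div hL2 hLn hL hm j q.1 q.2,
   le_trans (Finset.inf'_le _ (Finset.mem_univ (false, (0 : Fin n))))
     (Eexp_le_div hL2 hLn hL hval j)⟩

end final

/-- for every `j ≥ 1` there is a largest `a_j ≥ 0` with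
`V^j(B(n)) ⊆ p^{a_j}·B(n)`, and `a_j / j` converges to `1/2` if `n` is odd and to
`(n/2 − 1)/n` if `n` is even (the first Newton slope of `B(n)`). -/
theorem stmt0 (p : ℕ) [Fact p.Prime] (hp : Odd p)
    (k : Type*) [Field k] [IsAlgClosed k] [CharP k p] [PerfectRing k p]
    (n : ℕ) (hn : 1 ≤ n) :
    (∀ j : ℕ, 1 ≤ j → ∃ a : ℕ, IsGreatest {a : ℕ | braidVpow_sub p k n j a} a) ∧
    (∀ aseq : ℕ → ℕ, (∀ j : ℕ, 1 ≤ j → IsGreatest {a : ℕ | braidVpow_sub p k n j a} (aseq j)) →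
      Filter.Tendsto (fun j => (aseq j : ℝ) / (j : ℝ)) Filter.atTop
        (nhds (if Odd n then 1 / 2 else ((n : ℝ) / 2 - 1) / n))) := by
  haveI : NeZero n := ⟨by omega⟩
  constructor
  · exact fun j _ => ⟨Amin n j, greatest p k n j⟩
  · intro aseq haseq
    have haeq : ∀ j, 1 ≤ j → aseq j = Amin n j :=
      fun j hj => (haseq j hj).unique (greatest p k n j)
    by_cases hodd : Odd n
    · rw [if_pos hodd]
      have hm : ∀ (b : Bool) (i : Fin n), n ≤ Eexp (2 * n) b i :=
        fun b i => (Eexp_two_n hodd b i).ge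
      have hval : Eexp (2 * n) false (0 : Fin n) = n := Eexp_two_n hodd false 0
      have hconv := conv_aux aseq n (2 * n) (by omega)
        (fun j hj => by
          rw [haeq j hj]
          exact Amin_bounds n (Dvd.intro n rfl) (Dvd.intro 2 (mul_comm n 2)) (by omega)
            hm hval j)
      have hval2 : ((n : ℝ)) / ((2 * n : ℕ) : ℝ) = 1 / 2 := by
        have : (n : ℝ) ≠ 0 := by positivity
        push_cast
        field_simp
      rw [← hval2]
      exact hconv
    · rw [if_neg hodd]
      have hev : Even n := Nat.not_odd_iff_even.mp hodd
      have hdvd : 2 ∣ n := hev.two_dvd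
      have hn2 : 2 ≤ n := by omega
      have hm : ∀ (b : Bool) (i : Fin n), n / 2 - 1 ≤ Eexp n b i := by
        intro b i
        have h := Eexp_even hev b i
        by_cases ht : tog i.val b = true <;> simp [ht] at h <;> omega
      have hval : Eexp n false (0 : Fin n) = n / 2 - 1 := by
        have h := Eexp_even hev false (0 : Fin n)
        have h0 : tog (0 : Fin n).val false = false := by
          have : (0 : Fin n).val = 0 := rfl
          rw [this]; rfl
        rw [h0] at h
        simp only [Bool.false_eq_true, if_false, mul_zero, add_zero] at h
        omega
      have hconv := conv_aux aseq (n / 2 - 1) n (by omega)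
        (fun j hj => by
          rw [haeq j hj]
          exact Amin_bounds n hdvd dvd_rfl (by omega) hm hval j)
      have hc1 : ((n / 2 : ℕ) : ℝ) = (n : ℝ) / 2 := by
        have h : ((n / 2 : ℕ) : ℝ) * 2 = (n : ℝ) := by
          exact_mod_cast congrArg (Nat.cast : ℕ → ℝ) (Nat.div_mul_cancel hdvd)
        linarith
      have hc2 : ((n / 2 - 1 : ℕ) : ℝ) = (n : ℝ) / 2 - 1 := by
        rw [Nat.cast_sub (by omega : 1 ≤ n / 2), hc1, Nat.cast_one]
      rw [show ((n : ℝ) / 2 - 1) / n = ((n / 2 - 1 : ℕ) : ℝ) / (n : ℝ) by rw [hc2]]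
      exact hconv
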